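/- arXiv:1901.09572 — 2 statements merged into one kernel-verified Lean document; each statement's English description precedes it below -/
import Mathlib

section
/- Let a, b ∈ ℝ, α, A ∈ ℝ \ {0}, n ∈ ℕ, and Q(β) = β(β−1) + aβ + b with Q(α) ≠ 0. Define for i = 0,…,n: c_i = (−1)^{n−i} · (n!/i!) · (A/Q(α)^{n−i+1}) · Σ_{j=0}^{⌊(n−i)/2⌋} (−1)^j · C(n−i−j, j) · Q'(α)^{n−i−2j} · Q(α)^j. Then the function y_p(x) = x^α · Σ_{i=0}^{n} c_i (ln x)^i satisfies x²y_p''(x) + a·x·y_p'(x) + b·y_p(x) = A·x^α·(ln x)^n for all x > 0. -/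
open Real Finset

noncomputable def Sfun (x y : ℝ) (m : ℕ) : ℝ :=
  ∑ j ∈ Finset.range (m / 2 + 1),
    (-1 : ℝ) ^ j * ((m - j).choose j : ℝ) * x ^ (m - 2 * j) * y ^ j

lemma Sfun_zero (x y : ℝ) : Sfun x y 0 = 1 := by simp [Sfun]

lemma Sfun_one (x y : ℝ) : Sfun x y 1 = x := by simp [Sfun]

lemma Sfun_rec (x y : ℝ) (m : ℕ) :
    Sfun x y (m + 2) = x * Sfun x y (m + 1) - y * Sfun x y m := by
  unfold Sfun
  have h2 : (m + 2) / 2 + 1 = m / 2 + 1 + 1 := by omega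
  rw [h2, Finset.sum_range_succ']
  -- extend the (m+1)-sum to range (m/2+1+1)
  have hx1 : x * ∑ j ∈ Finset.range ((m+1)/2 + 1),
      (-1:ℝ)^j * (((m+1) - j).choose j : ℝ) * x ^ ((m+1) - 2*j) * y ^ j
      = x * ∑ j ∈ Finset.range (m/2 + 1 + 1),
      (-1:ℝ)^j * (((m+1) - j).choose j : ℝ) * x ^ ((m+1) - 2*j) * y ^ j := by
    rcases Nat.even_or_odd m with ⟨k, hk⟩ | ⟨k, hk⟩
    · subst hk
      have e1 : (k + k + 1) / 2 + 1 = k + 1 := by omega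
      have e0 : (k + k) / 2 + 1 + 1 = k + 1 + 1 := by omega
      rw [e1, e0, Finset.sum_range_succ _ (k+1)]
      have hz : ((k + k + 1 - (k+1)).choose (k+1) : ℝ) = 0 := by
        have : k + k + 1 - (k+1) = k := by omega
        rw [this]
        exact_mod_cast Nat.cast_eq_zero.mpr (Nat.choose_eq_zero_of_lt (by omega))
      rw [hz]; ring
    · subst hk
      have : (2*k + 1 + 1) / 2 + 1 = (2*k+1)/2 + 1 + 1 := by omega
      rw [this]
  rw [hx1, Finset.mul_sum, Finset.sum_range_succ' (fun j => x * ((-1:ℝ)^j * (((m+1) - j).choose j : ℝ) * x ^ ((m+1) - 2*j) * y ^ j))]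
  have hmain : ∀ j ∈ Finset.range (m/2 + 1),
      (-1:ℝ)^(j+1) * ((m + 2 - (j+1)).choose (j+1) : ℝ) * x ^ (m + 2 - 2*(j+1)) * y ^ (j+1)
      = x * ((-1:ℝ)^(j+1) * (((m+1) - (j+1)).choose (j+1) : ℝ) * x ^ ((m+1) - 2*(j+1)) * y ^ (j+1))
        - y * ((-1:ℝ)^j * ((m - j).choose j : ℝ) * x ^ (m - 2*j) * y ^ j) := by
    intro j hj
    have hjm : 2 * j ≤ m := by
      have := Finset.mem_range.mp hj; omega
    have hch : (m + 2 - (j+1)).choose (j+1) = (m - j).choose j + (m - j).choose (j+1) := by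
      have : m + 2 - (j+1) = (m - j) + 1 := by omega
      rw [this, Nat.choose_succ_succ]
    rcases le_or_gt (2*j + 1) m with hle | hgt
    · have e1 : m + 2 - 2*(j+1) = (m - 2*j - 1) + 1 := by omega
      have e2 : (m+1) - 2*(j+1) = m - 2*j - 1 := by omega
      have e3 : m - 2*j = (m - 2*j - 1) + 1 := by omega
      rw [hch, e1, e2, e3]
      push_cast
      ring
    · -- m = 2*j even, top case
      have hm : m = 2*j := by omega
      have e1 : m + 2 - 2*(j+1) = 0 := by omega
      have e2 : (m+1) - 2*(j+1) = 0 := by omega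
      have e3 : m - 2*j = 0 := by omega
      have hz : ((m+1) - (j+1)).choose (j+1) = 0 := by
        apply Nat.choose_eq_zero_of_lt; omega
      have hc2 : (m - j).choose (j+1) = 0 := by
        apply Nat.choose_eq_zero_of_lt; omega
      rw [hch, hz, hc2, e1, e2, e3]
      push_cast
      ring
  rw [Finset.sum_congr rfl hmain, Finset.sum_sub_distrib, ← Finset.mul_sum]
  simp [pow_succ, ← Finset.mul_sum]
  ring

lemma hasDerivAt_F (β : ℝ) (d : ℕ → ℝ) (N : ℕ) {x : ℝ} (hx : 0 < x) :
    HasDerivAt (fun x : ℝ => x ^ β * ∑ i ∈ Finset.range (N + 1), d i * Real.log x ^ i)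
      (x ^ (β - 1) * ∑ i ∈ Finset.range (N + 1),
        (β * d i * Real.log x ^ i + (i : ℝ) * d i * Real.log x ^ (i - 1))) x := by
  have hlog : HasDerivAt Real.log x⁻¹ x := Real.hasDerivAt_log hx.ne'
  have hpow : HasDerivAt (fun x : ℝ => x ^ β) (β * x ^ (β - 1)) x :=
    Real.hasDerivAt_rpow_const (Or.inl hx.ne')
  have hsum : HasDerivAt (fun x : ℝ => ∑ i ∈ Finset.range (N+1), d i * Real.log x ^ i)
      (∑ i ∈ Finset.range (N+1), d i * ((i : ℝ) * Real.log x ^ (i-1) * x⁻¹)) x := by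
    apply HasDerivAt.fun_sum
    intro i _
    exact (hlog.pow i).const_mul (d i)
  have h := hpow.fun_mul hsum
  refine h.congr_deriv ?_
  symm
  have hxβ : x ^ β * x⁻¹ = x ^ (β - 1) := by
    rw [Real.rpow_sub hx, Real.rpow_one]
    field_simp
  rw [Finset.mul_sum, Finset.mul_sum, Finset.mul_sum, ← Finset.sum_add_distrib]
  refine Finset.sum_congr rfl fun i _ => ?_
  linear_combination -(d i * (i:ℝ) * Real.log x ^ (i-1)) * hxβ

lemma shift1 (d : ℕ → ℝ) (N : ℕ) (t : ℝ) (hd : d (N + 1) = 0) :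
    ∑ i ∈ Finset.range (N + 1), (i : ℝ) * d i * t ^ (i - 1)
      = ∑ i ∈ Finset.range (N + 1), ((i : ℝ) + 1) * d (i + 1) * t ^ i := by
  rw [Finset.sum_range_succ' (fun i => (i : ℝ) * d i * t ^ (i - 1)),
    Finset.sum_range_succ (fun i => ((i : ℝ) + 1) * d (i + 1) * t ^ i)]
  simp only [hd, Nat.cast_zero, zero_mul, mul_zero, zero_add, add_zero, zero_pow]
  refine Finset.sum_congr rfl fun i _ => ?_
  push_cast
  ring

lemma deriv_F (β : ℝ) (d : ℕ → ℝ) (N : ℕ) (hd : d (N + 1) = 0) {x : ℝ} (hx : 0 < x) :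
    deriv (fun x : ℝ => x ^ β * ∑ i ∈ Finset.range (N + 1), d i * Real.log x ^ i) x
      = x ^ (β - 1) * ∑ i ∈ Finset.range (N + 1),
          (β * d i + ((i : ℝ) + 1) * d (i + 1)) * Real.log x ^ i := by
  rw [(hasDerivAt_F β d N hx).deriv]
  congr 1
  rw [Finset.sum_add_distrib, shift1 d N _ hd, ← Finset.sum_add_distrib]
  refine Finset.sum_congr rfl fun i _ => ?_
  ring

/-- closed-form coefficients, non-root case. -/
theorem stmt_4 (a b α A : ℝ) (n : ℕ) (hα : α ≠ 0) (hA : A ≠ 0)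
    (hQ : α * (α - 1) + a * α + b ≠ 0)
    (c : ℕ → ℝ)
    (hc : ∀ i, i ≤ n →
      c i = (-1 : ℝ) ^ (n - i) * ((n.factorial : ℝ) / (i.factorial : ℝ)) *
        (A / (α * (α - 1) + a * α + b) ^ (n - i + 1)) *
        ∑ j ∈ Finset.range ((n - i) / 2 + 1),
          (-1 : ℝ) ^ j * ((n - i - j).choose j : ℝ) *
            (2 * α + a - 1) ^ (n - i - 2 * j) * (α * (α - 1) + a * α + b) ^ j) :
    ∀ x > (0 : ℝ),
      x ^ 2 * deriv (deriv
          (fun x : ℝ => x ^ α * ∑ i ∈ Finset.range (n + 1), c i * Real.log x ^ i)) x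
        + a * x * deriv
          (fun x : ℝ => x ^ α * ∑ i ∈ Finset.range (n + 1), c i * Real.log x ^ i) x
        + b * (x ^ α * ∑ i ∈ Finset.range (n + 1), c i * Real.log x ^ i)
      = A * x ^ α * Real.log x ^ n := by
  set Q : ℝ := α * (α - 1) + a * α + b with hQdef
  set P : ℝ := 2 * α + a - 1 with hPdef
  set d : ℕ → ℝ := fun i => if i ≤ n then c i else 0 with hddef
  have hd0 : ∀ i, n < i → d i = 0 := fun i hi => if_neg (by omega)
  have hdc : ∀ i, i ≤ n → d i = c i := fun i hi => if_pos hi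
  have hSf : ∀ m : ℕ, (∑ j ∈ Finset.range (m / 2 + 1),
      (-1 : ℝ) ^ j * ((m - j).choose j : ℝ) * P ^ (m - 2 * j) * Q ^ j) = Sfun P Q m :=
    fun m => rfl
  have hfacne : ∀ k : ℕ, ((k.factorial : ℝ)) ≠ 0 :=
    fun k => Nat.cast_ne_zero.mpr k.factorial_ne_zero
  -- the coefficient recurrence
  have hrec : ∀ i, i ≤ n →
      Q * d i + ((i:ℝ)+1) * P * d (i+1) + ((i:ℝ)+1) * ((i:ℝ)+2) * d (i+2)
        = if i = n then A else 0 := by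
    intro i hi
    by_cases h1 : i = n
    · subst h1
      rw [hdc i le_rfl, hd0 (i+1) (by omega), hd0 (i+2) (by omega), hc i le_rfl, if_pos rfl]
      simp only [Nat.sub_self]
      rw [hSf 0, Sfun_zero]
      field_simp
      ring
    · by_cases h2 : i + 1 = n
      · rw [hdc i hi, hdc (i+1) (by omega), hd0 (i+2) (by omega),
          hc i hi, hc (i+1) (by omega), if_neg h1]
        have e1 : n - i = 1 := by omega
        have e0 : n - (i+1) = 0 := by omega
        rw [e1, e0, hSf 1, hSf 0, Sfun_one, Sfun_zero]
        have hfs : ((i+1).factorial : ℝ) = ((i:ℝ)+1) * (i.factorial : ℝ) := by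
          rw [Nat.factorial_succ]; push_cast; ring
        rw [hfs]
        field_simp
        ring
      · -- i + 2 ≤ n
        obtain ⟨k, hk⟩ : ∃ k, n = i + 2 + k := ⟨n - i - 2, by omega⟩
        rw [hdc i hi, hdc (i+1) (by omega), hdc (i+2) (by omega),
          hc i hi, hc (i+1) (by omega), hc (i+2) (by omega), if_neg h1]
        have e2 : n - i = k + 2 := by omega
        have e1 : n - (i+1) = k + 1 := by omega
        have e0 : n - (i+2) = k := by omega
        rw [e2, e1, e0, hSf (k+2), hSf (k+1), hSf k, Sfun_rec]
        have hfs1 : ((i+1).factorial : ℝ) = ((i:ℝ)+1) * (i.factorial : ℝ) := by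
          rw [Nat.factorial_succ]; push_cast; ring
        have hfs2 : ((i+2).factorial : ℝ) = ((i:ℝ)+2) * ((i+1).factorial : ℝ) := by
          rw [show i + 2 = (i+1)+1 from rfl, Nat.factorial_succ]; push_cast; ring
        have hQp : ∀ m : ℕ, Q ^ m ≠ 0 := fun m => pow_ne_zero m hQ
        rw [hfs2, hfs1]
        field_simp
        ring
  -- the polynomial identity
  have hpoly : ∀ t : ℝ, (∑ i ∈ Finset.range (n+1),
      ((((α-1) * (α * d i + ((i:ℝ)+1) * d (i+1))
        + ((i:ℝ)+1) * (α * d (i+1) + (((i+1:ℕ):ℝ)+1) * d ((i+1)+1)))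
        + a * (α * d i + ((i:ℝ)+1) * d (i+1)) + b * d i) * t ^ i)) = A * t ^ n := by
    intro t
    have h1 : ∀ i ∈ Finset.range (n+1),
        ((((α-1) * (α * d i + ((i:ℝ)+1) * d (i+1))
          + ((i:ℝ)+1) * (α * d (i+1) + (((i+1:ℕ):ℝ)+1) * d ((i+1)+1)))
          + a * (α * d i + ((i:ℝ)+1) * d (i+1)) + b * d i) * t ^ i)
        = (if i = n then A else 0) * t ^ i := by
      intro i hi
      have hi' : i ≤ n := by
        have := Finset.mem_range.mp hi; omega
      rw [← hrec i hi']
      rw [hQdef, hPdef]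
      push_cast
      ring
    rw [Finset.sum_congr rfl h1]
    simp only [ite_mul, zero_mul]
    rw [Finset.sum_ite_eq' (Finset.range (n+1)) n (fun i => A * t ^ i)]
    simp
  -- assembly
  intro x hx
  have hxne : x ≠ 0 := ne_of_gt hx
  have hfun : (fun x : ℝ => x ^ α * ∑ i ∈ Finset.range (n+1), c i * Real.log x ^ i)
      = (fun x : ℝ => x ^ α * ∑ i ∈ Finset.range (n+1), d i * Real.log x ^ i) := by
    funext y
    congr 1
    refine Finset.sum_congr rfl fun i hi => ?_
    rw [hdc i (by have := Finset.mem_range.mp hi; omega)]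
  rw [hfun]
  have hfunx : (∑ i ∈ Finset.range (n+1), c i * Real.log x ^ i)
      = ∑ i ∈ Finset.range (n+1), d i * Real.log x ^ i := by
    refine Finset.sum_congr rfl fun i hi => ?_
    rw [hdc i (by have := Finset.mem_range.mp hi; omega)]
  rw [hfunx]
  have hdn1 : d (n+1) = 0 := hd0 _ (by omega)
  have hG1 : (fun i => α * d i + ((i:ℝ)+1) * d (i+1)) (n+1) = 0 := by
    simp only [hd0 (n+1) (by omega), hd0 (n+2) (by omega)]
    simp
  have hev : deriv (fun x : ℝ => x ^ α * ∑ i ∈ Finset.range (n+1), d i * Real.log x ^ i)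
      =ᶠ[nhds x] (fun y : ℝ => y ^ (α - 1) * ∑ i ∈ Finset.range (n+1),
        (α * d i + ((i:ℝ)+1) * d (i+1)) * Real.log y ^ i) := by
    filter_upwards [isOpen_Ioi.mem_nhds hx] with y hy
    exact deriv_F α d n hdn1 hy
  rw [hev.deriv_eq, deriv_F (α - 1) (fun i => α * d i + ((i:ℝ)+1) * d (i+1)) n hG1 hx,
    deriv_F α d n hdn1 hx]
  have e1 : x ^ (α-1) = x ^ α / x := by
    rw [Real.rpow_sub hx, Real.rpow_one]
  have e2 : x ^ (α-1-1) = x ^ α / x ^ 2 := by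
    rw [show α - 1 - 1 = α - 2 by ring, Real.rpow_sub hx,
      show (2:ℝ) = ((2:ℕ):ℝ) by norm_num, Real.rpow_natCast]
  rw [e1, e2]
  have keyS : (∑ i ∈ Finset.range (n+1),
        ((α - 1) * (α * d i + ((i:ℝ) + 1) * d (i + 1)) +
          ((i:ℝ) + 1) * (α * d (i + 1) + ((i:ℝ) + 1 + 1) * d (i + 1 + 1))) * Real.log x ^ i)
      + a * (∑ i ∈ Finset.range (n+1), (α * d i + ((i:ℝ) + 1) * d (i + 1)) * Real.log x ^ i)
      + b * (∑ i ∈ Finset.range (n+1), d i * Real.log x ^ i)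
      = A * Real.log x ^ n := by
    rw [← hpoly (Real.log x), Finset.mul_sum, Finset.mul_sum, ← Finset.sum_add_distrib,
      ← Finset.sum_add_distrib]
    exact Finset.sum_congr rfl fun i _ => by push_cast; ring
  push_cast
  field_simp
  linear_combination keyS
end

section
/- Let a, b ∈ ℝ with b ≠ 0, c ∈ ℝ, κ > −1, and let β₁, β₂ be distinct simple roots of Q(β) = β(β−1) + aβ + b. Let θ satisfy Q(θ) ≠ 0, and ρ, I, δ₁, δ₂ ∈ ℝ. Define V₁(x) = δ₁x^{β₁} + δ₂x^{β₂} + ξ₁¹x^θ + ξ₂¹ with ξ₁¹ = cρ(1+κ)^θ/Q(θ), ξ₂¹ = −cI/b, and define V_p²(x) = η₁²(ln x)x^{β₁} + η₂²(ln x)x^{β₂} + ξ₁²x^θ + ξ₂² with η₁² = δ₁c(1+κ)^{β₁}/Q'(β₁), η₂² = δ₂c(1+κ)^{β₂}/Q'(β₂), ξ₁² = ρ(c(1+κ)^θ/Q(θ))², ξ₂² = −(c/b)²I. Then for all x > 0: x²(V_p²)''(x) + a·x·(V_p²)'(x) + b·V_p²(x) = c·V₁(x(1+κ)). -/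
set_option maxHeartbeats 1000000

open Real

private lemma hd_log_pow (d p x : ℝ) (hx : 0 < x) :
    HasDerivAt (fun x : ℝ => d * Real.log x * x ^ p)
      (d * x ^ (p - 1) + d * p * Real.log x * x ^ (p - 1)) x := by
  have h1 : HasDerivAt Real.log x⁻¹ x := Real.hasDerivAt_log hx.ne'
  have h2 : HasDerivAt (fun x : ℝ => x ^ p) (p * x ^ (p - 1)) x :=
    Real.hasDerivAt_rpow_const (Or.inl hx.ne')
  have h := (h1.const_mul d).mul h2
  refine h.congr_deriv ?_
  rw [Real.rpow_sub hx, Real.rpow_one]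
  field_simp

private lemma hd_pow (c p x : ℝ) (hx : 0 < x) :
    HasDerivAt (fun x : ℝ => c * x ^ p) (c * p * x ^ (p - 1)) x := by
  have h2 : HasDerivAt (fun x : ℝ => x ^ p) (p * x ^ (p - 1)) x :=
    Real.hasDerivAt_rpow_const (Or.inl hx.ne')
  refine (h2.const_mul c).congr_deriv ?_
  ring

/-- second-step particular solution V_p² in the backwards construction. -/
theorem stmt_14 (a b c κ θ ρ I δ₁ δ₂ β₁ β₂ : ℝ) (hb : b ≠ 0) (hκ : κ > -1)
    (hβ₁ : β₁ * (β₁ - 1) + a * β₁ + b = 0)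
    (hβ₂ : β₂ * (β₂ - 1) + a * β₂ + b = 0)
    (hβne : β₁ ≠ β₂)
    (hβ₁' : 2 * β₁ + a - 1 ≠ 0)
    (hβ₂' : 2 * β₂ + a - 1 ≠ 0)
    (hQθ : θ * (θ - 1) + a * θ + b ≠ 0) :
    ∀ x > (0 : ℝ),
      x ^ 2 * deriv (deriv (fun x : ℝ =>
          δ₁ * c * (1 + κ) ^ β₁ / (2 * β₁ + a - 1) * Real.log x * x ^ β₁
          + δ₂ * c * (1 + κ) ^ β₂ / (2 * β₂ + a - 1) * Real.log x * x ^ β₂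
          + ρ * (c * (1 + κ) ^ θ / (θ * (θ - 1) + a * θ + b)) ^ 2 * x ^ θ
          + (-(c / b) ^ 2 * I))) x
        + a * x * deriv (fun x : ℝ =>
          δ₁ * c * (1 + κ) ^ β₁ / (2 * β₁ + a - 1) * Real.log x * x ^ β₁
          + δ₂ * c * (1 + κ) ^ β₂ / (2 * β₂ + a - 1) * Real.log x * x ^ β₂
          + ρ * (c * (1 + κ) ^ θ / (θ * (θ - 1) + a * θ + b)) ^ 2 * x ^ θ
          + (-(c / b) ^ 2 * I)) x
        + b * (δ₁ * c * (1 + κ) ^ β₁ / (2 * β₁ + a - 1) * Real.log x * x ^ β₁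
          + δ₂ * c * (1 + κ) ^ β₂ / (2 * β₂ + a - 1) * Real.log x * x ^ β₂
          + ρ * (c * (1 + κ) ^ θ / (θ * (θ - 1) + a * θ + b)) ^ 2 * x ^ θ
          + (-(c / b) ^ 2 * I))
      = c * (δ₁ * (x * (1 + κ)) ^ β₁ + δ₂ * (x * (1 + κ)) ^ β₂
          + c * ρ * (1 + κ) ^ θ / (θ * (θ - 1) + a * θ + b) * (x * (1 + κ)) ^ θ
          + (-(c * I) / b)) := by
  set A := δ₁ * c * (1 + κ) ^ β₁ / (2 * β₁ + a - 1) with hA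
  set B := δ₂ * c * (1 + κ) ^ β₂ / (2 * β₂ + a - 1) with hB
  set C := ρ * (c * (1 + κ) ^ θ / (θ * (θ - 1) + a * θ + b)) ^ 2 with hC
  set D := -(c / b) ^ 2 * I with hD
  set f : ℝ → ℝ := fun x => A * Real.log x * x ^ β₁ + B * Real.log x * x ^ β₂
      + C * x ^ θ + D with hf
  set g1 : ℝ → ℝ := fun x =>
      ((A * x ^ (β₁ - 1) + A * β₁ * Real.log x * x ^ (β₁ - 1))
      + (B * x ^ (β₂ - 1) + B * β₂ * Real.log x * x ^ (β₂ - 1)))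
      + C * θ * x ^ (θ - 1) with hg1
  set g2 : ℝ → ℝ := fun x =>
      ((A * (β₁ - 1) * x ^ (β₁ - 1 - 1)
        + (A * β₁ * x ^ (β₁ - 1 - 1) + A * β₁ * (β₁ - 1) * Real.log x * x ^ (β₁ - 1 - 1)))
      + (B * (β₂ - 1) * x ^ (β₂ - 1 - 1)
        + (B * β₂ * x ^ (β₂ - 1 - 1) + B * β₂ * (β₂ - 1) * Real.log x * x ^ (β₂ - 1 - 1))))
      + C * θ * (θ - 1) * x ^ (θ - 1 - 1) with hg2
  have hdf : ∀ x : ℝ, 0 < x → HasDerivAt f (g1 x) x := by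
    intro x hx
    have h := (((hd_log_pow A β₁ x hx).add (hd_log_pow B β₂ x hx)).add
      (hd_pow C θ x hx)).add (hasDerivAt_const x D)
    refine h.congr_deriv ?_
    simp [hg1]
  have hdg1 : ∀ x : ℝ, 0 < x → HasDerivAt g1 (g2 x) x := by
    intro x hx
    have h := (((hd_pow A (β₁ - 1) x hx).add (hd_log_pow (A * β₁) (β₁ - 1) x hx)).add
      ((hd_pow B (β₂ - 1) x hx).add (hd_log_pow (B * β₂) (β₂ - 1) x hx))).add
      (hd_pow (C * θ) (θ - 1) x hx)
    refine h.congr_deriv ?_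
    simp [hg2]
  intro x hx
  have hderiv1 : deriv f x = g1 x := (hdf x hx).deriv
  have hev : deriv f =ᶠ[nhds x] g1 := by
    filter_upwards [isOpen_Ioi.mem_nhds (show x ∈ Set.Ioi 0 from hx)] with y hy
    exact (hdf y hy).deriv
  have hderiv2 : deriv (deriv f) x = g2 x := by
    rw [hev.deriv_eq]
    exact (hdg1 x hx).deriv
  show x ^ 2 * deriv (deriv f) x + a * x * deriv f x + b * f x = _
  rw [hderiv2, hderiv1]
  have hκ0 : (0:ℝ) < 1 + κ := by linarith
  have e1 : ∀ p : ℝ, x ^ (p - 1) = x ^ p / x := by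
    intro p; rw [Real.rpow_sub hx, Real.rpow_one]
  have e2 : ∀ p : ℝ, x ^ (p - 1 - 1) = x ^ p / x / x := by
    intro p; rw [Real.rpow_sub hx, Real.rpow_sub hx, Real.rpow_one]
  have m1 : (x * (1 + κ)) ^ β₁ = x ^ β₁ * (1 + κ) ^ β₁ := Real.mul_rpow hx.le hκ0.le
  have m2 : (x * (1 + κ)) ^ β₂ = x ^ β₂ * (1 + κ) ^ β₂ := Real.mul_rpow hx.le hκ0.le
  have m3 : (x * (1 + κ)) ^ θ = x ^ θ * (1 + κ) ^ θ := Real.mul_rpow hx.le hκ0.le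
  have main : x ^ 2 * g2 x + a * x * g1 x + b * f x
      = (A * (2 * β₁ + a - 1)) * x ^ β₁
        + (A * (β₁ * (β₁ - 1) + a * β₁ + b)) * (Real.log x * x ^ β₁)
        + (B * (2 * β₂ + a - 1)) * x ^ β₂
        + (B * (β₂ * (β₂ - 1) + a * β₂ + b)) * (Real.log x * x ^ β₂)
        + (C * (θ * (θ - 1) + a * θ + b)) * x ^ θ + b * D := by
    simp only [hg1, hg2, hf, e1, e2]
    field_simp
    ring
  rw [main, hβ₁, hβ₂, m1, m2, m3, hA, hB, hC, hD]
  field_simp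
  ring
end
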